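/- Let (m_n)_{n ≥ 0} be the Thue–Morse sequence with values 0 and 1, defined by m_n = (sum of the binary digits of n) mod 2, viewed as a real sequence. Then: (i) the frequencies of length-2 blocks exist and satisfy F₀₀ = F₁₁ = 1/6 and F₀₁ = F₁₀ = 1/3, i.e., #{i < N : m_i = m_{i+1} = 0}/N → 1/6, #{i < N : m_i = m_{i+1} = 1}/N → 1/6, #{i < N : m_i = 0, m_{i+1} = 1}/N → 1/3, #{i < N : m_i = 1, m_{i+1} = 0}/N → 1/3; (ii) the inconstancy of the sequence exists and equals ℐ((m_n)) = (1 + 2√2)/3. -/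

import Mathlib

noncomputable section
open MeasureTheory Real Set Filter
open scoped ENNReal

/-- The point `(x, y)` of the Euclidean plane. -/
def pt (x y : ℝ) : EuclideanSpace ℝ (Fin 2) := WithLp.toLp 2 ![x, y]

/-- The polygonal curve `Γ_N` through `(0,u₀), (1,u₁), …, (N,u_N)`: the union of the
segments joining `(i, u_i)` to `(i+1, u_{i+1})` for `i = 0, …, N−1`. -/
def polyCurve (u : ℕ → ℝ) (N : ℕ) : Set (EuclideanSpace ℝ (Fin 2)) :=
  ⋃ i ∈ Finset.range N, segment ℝ (pt i (u i)) (pt (i + 1) (u (i + 1)))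

/-- The length `ℓ(Γ_N) = Σ_{i<N} √(1 + (u_{i+1} − u_i)²)` of the polygonal curve. -/
def polyLength (u : ℕ → ℝ) (N : ℕ) : ℝ :=
  ∑ i ∈ Finset.range N, Real.sqrt (1 + (u (i + 1) - u i) ^ 2)

/-- The perimeter `δ(Γ_N)` of the convex hull of the polygonal curve: the
one-dimensional Hausdorff measure of the frontier of the convex hull. -/
def polyDelta (u : ℕ → ℝ) (N : ℕ) : ℝ :=
  (μH[1] (frontier (convexHull ℝ (polyCurve u N)))).toReal

/-- The inconstancy `ℐ(Γ_N) := 2 ℓ(Γ_N) / δ(Γ_N)` of the polygonal curve. -/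
def polyIncon (u : ℕ → ℝ) (N : ℕ) : ℝ :=
  2 * polyLength u N / polyDelta u N

/-- The number of indices `0 ≤ i < N` with `u_i = j` and `u_{i+1} = j'`. -/
def blockCount (u : ℕ → ℝ) (N : ℕ) (j j' : ℝ) : ℕ :=
  ((Finset.range N).filter fun i => u i = j ∧ u (i + 1) = j').card

/-- The Thue–Morse sequence with values `0` and `1`, viewed as a real sequence:
`m_n` is the sum of the binary digits of `n`, modulo `2`. -/
def thueMorse (n : ℕ) : ℝ := ((Nat.digits 2 n).sum % 2 : ℕ)



def tm (n : ℕ) : ℕ := (Nat.digits 2 n).sum % 2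

lemma tm_le_one (n : ℕ) : tm n ≤ 1 := Nat.lt_succ_iff.mp (Nat.mod_lt _ (by norm_num))

lemma tm_zero : tm 0 = 0 := by simp [tm]
lemma tm_one : tm 1 = 1 := by simp [tm]

lemma tm_two_mul (n : ℕ) : tm (2 * n) = tm n := by
  rcases Nat.eq_zero_or_pos n with h | h
  · simp [h]
  · unfold tm
    rw [Nat.digits_def' (by norm_num : 1 < 2) (by omega)]
    simp [Nat.mul_div_cancel_left _ (by norm_num : 0 < 2), Nat.mul_mod_right]

lemma tm_two_mul_add_one (n : ℕ) : tm (2 * n + 1) = 1 - tm n := by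
  unfold tm
  rw [Nat.digits_def' (by norm_num : 1 < 2) (by omega)]
  have h1 : (2 * n + 1) % 2 = 1 := by omega
  have h2 : (2 * n + 1) / 2 = n := by omega
  rw [h1, h2, List.sum_cons]
  have := Nat.mod_lt ((Nat.digits 2 n).sum) (show 0 < 2 by norm_num)
  omega

lemma tm_ne_even (j : ℕ) : tm (2 * j) ≠ tm (2 * j + 1) := by
  rw [tm_two_mul, tm_two_mul_add_one]
  have := tm_le_one j; omega

lemma tm_odd_eq_iff (j : ℕ) : tm (2 * j + 1) = tm (2 * j + 2) ↔ tm j ≠ tm (j + 1) := by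
  have h2 : (2 * j + 2) = 2 * (j + 1) := by ring
  rw [tm_two_mul_add_one, h2, tm_two_mul]
  have := tm_le_one j; have := tm_le_one (j + 1); omega

/-- generic counter -/
def cnt (p : ℕ → Prop) [DecidablePred p] (N : ℕ) : ℕ :=
  ((Finset.range N).filter p).card

lemma cnt_succ (p : ℕ → Prop) [DecidablePred p] (N : ℕ) :
    cnt p (N + 1) = cnt p N + if p N then 1 else 0 := by
  unfold cnt
  rw [Finset.range_add_one, Finset.filter_insert]
  split
  · rw [Finset.card_insert_of_notMem (by simp)]
  · simp

def cC (N : ℕ) : ℕ := cnt (fun i => tm i ≠ tm (i + 1)) N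
def cA (N : ℕ) : ℕ := cnt (fun i => tm i = 0 ∧ tm (i + 1) = 1) N
def cD (N : ℕ) : ℕ := cnt (fun i => tm i = 1 ∧ tm (i + 1) = 0) N
def cE0 (N : ℕ) : ℕ := cnt (fun i => tm i = 0 ∧ tm (i + 1) = 0) N
def cE1 (N : ℕ) : ℕ := cnt (fun i => tm i = 1 ∧ tm (i + 1) = 1) N

lemma cC_succ (N : ℕ) : cC (N + 1) = cC N + if tm N ≠ tm (N + 1) then 1 else 0 := cnt_succ _ N
lemma cA_succ (N : ℕ) : cA (N + 1) = cA N + if tm N = 0 ∧ tm (N + 1) = 1 then 1 else 0 := cnt_succ _ N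
lemma cD_succ (N : ℕ) : cD (N + 1) = cD N + if tm N = 1 ∧ tm (N + 1) = 0 then 1 else 0 := cnt_succ _ N
lemma cE0_succ (N : ℕ) : cE0 (N + 1) = cE0 N + if tm N = 0 ∧ tm (N + 1) = 0 then 1 else 0 := cnt_succ _ N
lemma cE1_succ (N : ℕ) : cE1 (N + 1) = cE1 N + if tm N = 1 ∧ tm (N + 1) = 1 then 1 else 0 := cnt_succ _ N

lemma cC_rec (N : ℕ) : cC N + cC (N / 2) = N := by
  induction N with
  | zero => rfl
  | succ N ih =>
    rcases Nat.even_or_odd N with ⟨j, hj⟩ | ⟨j, hj⟩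
    · have hj' : N = 2 * j := by omega
      subst hj'
      have h1 : (2 * j + 1) / 2 = j := by omega
      have h2 : (2 * j) / 2 = j := by omega
      rw [h1, cC_succ, if_pos (tm_ne_even j)]
      rw [h2] at ih
      omega
    · subst hj
      have h1 : (2 * j + 1 + 1) / 2 = j + 1 := by omega
      have h2 : (2 * j + 1) / 2 = j := by omega
      rw [h2] at ih
      rw [h1, cC_succ (2 * j + 1), cC_succ j, show 2 * j + 1 + 1 = 2 * j + 2 from by ring]
      have hiff := tm_odd_eq_iff j
      rcases eq_or_ne (tm (2 * j + 1)) (tm (2 * j + 2)) with h | h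
      · rw [if_neg (by simpa using h), if_pos (hiff.mp h)]; omega
      · rw [if_pos h, if_neg (fun hh => h (hiff.mpr hh))]; omega

lemma cE0_eq (N : ℕ) : cE0 N = cD (N / 2) := by
  induction N with
  | zero => rfl
  | succ N ih =>
    rcases Nat.even_or_odd N with ⟨j, hj⟩ | ⟨j, hj⟩
    · have hj' : N = 2 * j := by omega
      subst hj'
      have h1 : (2 * j + 1) / 2 = j := by omega
      have h2 : (2 * j) / 2 = j := by omega
      rw [h1, cE0_succ (2 * j), if_neg (by rintro ⟨u, v⟩; exact tm_ne_even j (u.trans v.symm))]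
      rw [h2] at ih
      omega
    · subst hj
      have h1 : (2 * j + 1 + 1) / 2 = j + 1 := by omega
      have h2 : (2 * j + 1) / 2 = j := by omega
      rw [h2] at ih
      rw [h1, cE0_succ (2 * j + 1), cD_succ j, show 2 * j + 1 + 1 = 2 * j + 2 from by ring]
      have ha : (tm (2 * j + 1) = 0 ∧ tm (2 * j + 2) = 0) ↔ (tm j = 1 ∧ tm (j + 1) = 0) := by
        rw [tm_two_mul_add_one, show (2 * j + 2) = 2 * (j + 1) by ring, tm_two_mul]
        have := tm_le_one j; omega
      rcases Classical.em (tm j = 1 ∧ tm (j + 1) = 0) with h | h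
      · rw [if_pos (ha.mpr h), if_pos h]; omega
      · rw [if_neg (fun hh => h (ha.mp hh)), if_neg h]; omega

lemma cE1_eq (N : ℕ) : cE1 N = cA (N / 2) := by
  induction N with
  | zero => rfl
  | succ N ih =>
    rcases Nat.even_or_odd N with ⟨j, hj⟩ | ⟨j, hj⟩
    · have hj' : N = 2 * j := by omega
      subst hj'
      have h1 : (2 * j + 1) / 2 = j := by omega
      have h2 : (2 * j) / 2 = j := by omega
      rw [h1, cE1_succ (2 * j), if_neg (by rintro ⟨u, v⟩; exact tm_ne_even j (u.trans v.symm))]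
      rw [h2] at ih
      omega
    · subst hj
      have h1 : (2 * j + 1 + 1) / 2 = j + 1 := by omega
      have h2 : (2 * j + 1) / 2 = j := by omega
      rw [h2] at ih
      rw [h1, cE1_succ (2 * j + 1), cA_succ j, show 2 * j + 1 + 1 = 2 * j + 2 from by ring]
      have ha : (tm (2 * j + 1) = 1 ∧ tm (2 * j + 2) = 1) ↔ (tm j = 0 ∧ tm (j + 1) = 1) := by
        rw [tm_two_mul_add_one, show (2 * j + 2) = 2 * (j + 1) by ring, tm_two_mul]
        have := tm_le_one j; omega
      rcases Classical.em (tm j = 0 ∧ tm (j + 1) = 1) with h | h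
      · rw [if_pos (ha.mpr h), if_pos h]; omega
      · rw [if_neg (fun hh => h (ha.mp hh)), if_neg h]; omega

lemma cA_eq_cD (N : ℕ) : cA N = cD N + tm N := by
  induction N with
  | zero => simp [cA, cD, cnt, tm_zero]
  | succ N ih =>
    rw [cA_succ, cD_succ, ih]
    have h1 := tm_le_one N; have h2 := tm_le_one (N + 1)
    rcases (Nat.le_one_iff_eq_zero_or_eq_one).mp h1 with h | h <;>
      rcases (Nat.le_one_iff_eq_zero_or_eq_one).mp h2 with h' | h' <;>
      simp [h, h']

lemma cA_add_cD (N : ℕ) : cA N + cD N = cC N := by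
  induction N with
  | zero => rfl
  | succ N ih =>
    rw [cA_succ, cD_succ, cC_succ]
    have h1 := tm_le_one N; have h2 := tm_le_one (N + 1)
    rcases (Nat.le_one_iff_eq_zero_or_eq_one).mp h1 with h | h <;>
      rcases (Nat.le_one_iff_eq_zero_or_eq_one).mp h2 with h' | h' <;>
      simp [h, h'] <;> omega

/-! ### Asymptotics -/

lemma cC_cast (N : ℕ) : (cC N : ℝ) = N - cC (N / 2) := by
  have h := cC_rec N
  have : ((cC N + cC (N / 2) : ℕ) : ℝ) = N := by rw [h]
  push_cast at this
  linarith

lemma cC_one : cC 1 = 1 := by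
  have := cC_succ 0
  rw [if_pos (by rw [tm_zero, tm_one]; omega)] at this
  simpa [cC, cnt] using this

lemma cC_abs_bound (N : ℕ) : |(cC N : ℝ) - 2 * N / 3| ≤ ((Nat.log 2 N : ℝ) + 1) / 3 := by
  induction N using Nat.strong_induction_on with
  | _ N ih =>
    match N, ih with
    | 0, _ => norm_num [cC, cnt]
    | 1, _ => rw [cC_one]; rw [abs_le]; norm_num
    | (n + 2), ih =>
      have h2 : 2 ≤ n + 2 := by omega
      have hM : (n + 2) / 2 < n + 2 := Nat.div_lt_self (by omega) one_lt_two
      have ihm := ih ((n + 2) / 2) hM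
      have hcast := cC_cast (n + 2)
      have hmod : ((n + 2 : ℕ) : ℝ) = 2 * (((n + 2) / 2 : ℕ) : ℝ) + (((n + 2) % 2 : ℕ) : ℝ) := by
        exact_mod_cast congrArg (Nat.cast : ℕ → ℝ) (Nat.div_add_mod (n + 2) 2).symm
      have hmod2 : (((n + 2) % 2 : ℕ) : ℝ) = 0 ∨ (((n + 2) % 2 : ℕ) : ℝ) = 1 := by
        rcases Nat.mod_two_eq_zero_or_one (n + 2) with h | h <;> [left; right] <;>
          rw [h] <;> norm_num
      have hlog : (Nat.log 2 ((n + 2) / 2) : ℝ) + 1 = Nat.log 2 (n + 2) := by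
        have hpos : 0 < Nat.log 2 (n + 2) := Nat.log_pos one_lt_two h2
        have := Nat.log_div_base 2 (n + 2)
        have : Nat.log 2 ((n + 2) / 2) + 1 = Nat.log 2 (n + 2) := by omega
        exact_mod_cast congrArg (Nat.cast : ℕ → ℝ) this
      rw [abs_le] at ihm ⊢
      constructor <;> rcases hmod2 with h | h <;> nlinarith [ihm.1, ihm.2]

lemma cD_cast (N : ℕ) : (cD N : ℝ) = ((cC N : ℝ) - tm N) / 2 := by
  have h1 := cA_eq_cD N
  have h2 := cA_add_cD N
  have : ((cD N + tm N : ℕ) : ℝ) + (cD N : ℝ) = cC N := by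
    rw [← h1]; exact_mod_cast congrArg (Nat.cast : ℕ → ℝ) h2
  push_cast at this
  linarith

lemma cA_cast (N : ℕ) : (cA N : ℝ) = ((cC N : ℝ) + tm N) / 2 := by
  have h1 := cA_eq_cD N
  have h2 := cD_cast N
  have : (cA N : ℝ) = (cD N : ℝ) + tm N := by exact_mod_cast congrArg (Nat.cast : ℕ → ℝ) h1
  rw [this, h2]; ring

lemma tm_cast_le_one (N : ℕ) : (0 : ℝ) ≤ (tm N : ℝ) ∧ (tm N : ℝ) ≤ 1 := by
  constructor
  · positivity
  · exact_mod_cast tm_le_one N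

lemma cD_abs_bound (N : ℕ) : |(cD N : ℝ) - N / 3| ≤ (Nat.log 2 N : ℝ) + 1 := by
  have h := cC_abs_bound N
  have h2 := cD_cast N
  have h3 := tm_cast_le_one N
  have h4 : (0 : ℝ) ≤ Nat.log 2 N := by positivity
  rw [abs_le] at h ⊢
  constructor <;> nlinarith [h.1, h.2, h3.1, h3.2]

lemma cA_abs_bound (N : ℕ) : |(cA N : ℝ) - N / 3| ≤ (Nat.log 2 N : ℝ) + 1 := by
  have h := cC_abs_bound N
  have h2 := cA_cast N
  have h3 := tm_cast_le_one N
  have h4 : (0 : ℝ) ≤ Nat.log 2 N := by positivity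
  rw [abs_le] at h ⊢
  constructor <;> nlinarith [h.1, h.2, h3.1, h3.2]

lemma cE0_abs_bound (N : ℕ) : |(cE0 N : ℝ) - N / 6| ≤ 2 * ((Nat.log 2 N : ℝ) + 1) := by
  have h := cD_abs_bound (N / 2)
  have hlog : (Nat.log 2 (N / 2) : ℝ) ≤ Nat.log 2 N := by
    exact_mod_cast Nat.log_mono_right (Nat.div_le_self N 2)
  have hmod : ((N : ℕ) : ℝ) = 2 * ((N / 2 : ℕ) : ℝ) + ((N % 2 : ℕ) : ℝ) := by
    exact_mod_cast congrArg (Nat.cast : ℕ → ℝ) (Nat.div_add_mod N 2).symm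
  have hmod2 : (0 : ℝ) ≤ ((N % 2 : ℕ) : ℝ) ∧ ((N % 2 : ℕ) : ℝ) ≤ 1 := by
    constructor
    · positivity
    · exact_mod_cast Nat.le_of_lt_succ (Nat.mod_lt N (by norm_num))
  have he : (cE0 N : ℝ) = cD (N / 2) := by
    exact_mod_cast congrArg (Nat.cast : ℕ → ℝ) (cE0_eq N)
  have h4 : (0 : ℝ) ≤ Nat.log 2 N := by positivity
  rw [abs_le] at h ⊢
  constructor <;> nlinarith [h.1, h.2, hmod2.1, hmod2.2]

lemma cE1_abs_bound (N : ℕ) : |(cE1 N : ℝ) - N / 6| ≤ 2 * ((Nat.log 2 N : ℝ) + 1) := by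
  have h := cA_abs_bound (N / 2)
  have hlog : (Nat.log 2 (N / 2) : ℝ) ≤ Nat.log 2 N := by
    exact_mod_cast Nat.log_mono_right (Nat.div_le_self N 2)
  have hmod : ((N : ℕ) : ℝ) = 2 * ((N / 2 : ℕ) : ℝ) + ((N % 2 : ℕ) : ℝ) := by
    exact_mod_cast congrArg (Nat.cast : ℕ → ℝ) (Nat.div_add_mod N 2).symm
  have hmod2 : (0 : ℝ) ≤ ((N % 2 : ℕ) : ℝ) ∧ ((N % 2 : ℕ) : ℝ) ≤ 1 := by
    constructor
    · positivity
    · exact_mod_cast Nat.le_of_lt_succ (Nat.mod_lt N (by norm_num))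
  have he : (cE1 N : ℝ) = cA (N / 2) := by
    exact_mod_cast congrArg (Nat.cast : ℕ → ℝ) (cE1_eq N)
  have h4 : (0 : ℝ) ≤ Nat.log 2 N := by positivity
  rw [abs_le] at h ⊢
  constructor <;> nlinarith [h.1, h.2, hmod2.1, hmod2.2]

lemma log_bound_tendsto : Tendsto (fun N : ℕ => ((Nat.log 2 N : ℝ) + 1) / N) atTop (nhds 0) := by
  have h1 : Tendsto (fun N : ℕ => Real.log N / N) atTop (nhds 0) := by
    have := (Real.tendsto_pow_log_div_mul_add_atTop 1 0 1 one_ne_zero).comp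
      tendsto_natCast_atTop_atTop (α := ℕ)
    simpa [Function.comp_def] using this
  have h2 : Tendsto (fun N : ℕ => 1 / (N : ℝ)) atTop (nhds 0) :=
    tendsto_one_div_atTop_nhds_zero_nat
  have h3 : Tendsto (fun N : ℕ => (Real.log N / N) * (1 / Real.log 2) + 1 / (N : ℝ))
      atTop (nhds 0) := by
    have := (h1.mul_const (1 / Real.log 2)).add h2
    simpa using this
  apply squeeze_zero'
    (g := fun N : ℕ => Real.log N / N * (1 / Real.log 2) + 1 / (N : ℝ))
  · filter_upwards [eventually_ge_atTop 1] with N hN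
    positivity
  · filter_upwards [eventually_ge_atTop 1] with N hN
    have hN1 : (1 : ℝ) ≤ N := by exact_mod_cast hN
    have hNpos : (0 : ℝ) < N := by linarith
    have hlb : (Nat.log 2 N : ℝ) ≤ Real.log N / Real.log 2 := by
      have := Real.natLog_le_logb N 2
      rwa [Real.logb, Real.log_div_log] at this
      
    have hlog2 : (0:ℝ) < Real.log 2 := Real.log_pos (by norm_num)
    have hrw : Real.log N / N * (1 / Real.log 2) + 1 / (N:ℝ) =
        (Real.log N / Real.log 2 + 1) / N := by
      field_simp
    rw [hrw]
    gcongr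
  · exact h3

lemma tendsto_counter (x : ℕ → ℝ) (α C : ℝ) (hC : 0 ≤ C)
    (h : ∀ N, |x N - α * N| ≤ C * ((Nat.log 2 N : ℝ) + 1)) :
    Tendsto (fun N : ℕ => x N / N) atTop (nhds α) := by
  rw [tendsto_iff_dist_tendsto_zero]
  simp only [Real.dist_eq]
  apply squeeze_zero' (g := fun N : ℕ => C * (((Nat.log 2 N : ℝ) + 1) / N))
  · filter_upwards with N using abs_nonneg _
  · filter_upwards [eventually_ge_atTop 1] with N hN
    have hNpos : (0 : ℝ) < N := by exact_mod_cast hN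
    have : x N / N - α = (x N - α * N) / N := by field_simp
    rw [this, abs_div, abs_of_pos hNpos, div_le_iff₀ hNpos]
    calc |x N - α * N| ≤ C * ((Nat.log 2 N : ℝ) + 1) := h N
      _ = C * (((Nat.log 2 N : ℝ) + 1) / N) * N := by field_simp
  · simpa using log_bound_tendsto.const_mul C


abbrev E2 := EuclideanSpace ℝ (Fin 2)

@[simp] lemma pt_zero (x y : ℝ) : pt x y 0 = x := rfl
@[simp] lemma pt_one (x y : ℝ) : pt x y 1 = y := rfl

lemma eq_pt (p : E2) : p = pt (p 0) (p 1) := by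
  ext i
  fin_cases i <;> rfl

lemma pt_combo (s t x1 y1 x2 y2 : ℝ) :
    s • pt x1 y1 + t • pt x2 y2 = pt (s * x1 + t * x2) (s * y1 + t * y2) := by
  ext i
  fin_cases i <;>
    simp [pt, PiLp.add_apply, PiLp.smul_apply, smul_eq_mul]

lemma coord_combo {v w : E2} (s t : ℝ) (i : Fin 2) :
    (s • v + t • w) i = s * v i + t * w i := by
  simp [PiLp.add_apply, PiLp.smul_apply, smul_eq_mul]

lemma segment_coords {v w p : E2} (h : p ∈ segment ℝ v w) :
    ∃ t : ℝ, 0 ≤ t ∧ t ≤ 1 ∧ ∀ i, p i = (1 - t) * v i + t * w i := by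
  obtain ⟨s, t, hs, ht, hst, rfl⟩ := h
  refine ⟨t, ht, by linarith, fun i => ?_⟩
  rw [coord_combo, show s = 1 - t by linarith]

lemma mem_segment_horiz {x1 x2 x : ℝ} (y : ℝ) (h1 : x1 ≤ x) (h2 : x ≤ x2) :
    pt x y ∈ segment ℝ (pt x1 y) (pt x2 y) := by
  rcases eq_or_lt_of_le (h1.trans h2) with h | h
  · have hx : x = x1 := le_antisymm (h ▸ h2) h1
    rw [hx]
    exact left_mem_segment _ _ _
  · set t := (x - x1) / (x2 - x1) with ht
    have hd : (0 : ℝ) < x2 - x1 := by linarith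
    have h0t : 0 ≤ t := div_nonneg (by linarith) hd.le
    have h1t : t ≤ 1 := by rw [ht, div_le_one hd]; linarith
    have hx : (1 - t) * x1 + t * x2 = x := by
      rw [ht]
      field_simp
      ring
    refine ⟨1 - t, t, by linarith, h0t, by ring, ?_⟩
    rw [pt_combo, hx, show (1 - t) * y + t * y = y by ring]

lemma mem_segment_of_combo {v w : E2} {t : ℝ} (h0 : 0 ≤ t) (h1 : t ≤ 1) :
    (1 - t) • v + t • w ∈ segment ℝ v w :=
  ⟨1 - t, t, by linarith, h0, by ring, rfl⟩

/-- The quadrilateral as an intersection of four half-planes. -/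
def quadSet (a b : ℝ) : Set E2 :=
  {p | 0 ≤ p 1 ∧ p 1 ≤ 1 ∧ p 1 ≤ p 0 ∧ p 0 ≤ b + (a - b) * p 1}

lemma convex_quadSet (a b : ℝ) : Convex ℝ (quadSet a b) := by
  rintro p hp q hq s t hs ht hst
  simp only [quadSet, Set.mem_setOf_eq, coord_combo] at hp hq ⊢
  obtain ⟨hp1, hp2, hp3, hp4⟩ := hp
  obtain ⟨hq1, hq2, hq3, hq4⟩ := hq
  refine ⟨by nlinarith, by nlinarith, by nlinarith, ?_⟩
  calc s * p 0 + t * q 0 ≤ s * (b + (a - b) * p 1) + t * (b + (a - b) * q 1) :=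
        add_le_add (mul_le_mul_of_nonneg_left hp4 hs) (mul_le_mul_of_nonneg_left hq4 ht)
    _ = b + (a - b) * (s * p 1 + t * q 1) := by linear_combination b * hst

lemma isClosed_quadSet (a b : ℝ) : IsClosed (quadSet a b) := by
  have h0 : Continuous fun p : E2 => p 0 := (PiLp.proj 2 (𝕜 := ℝ) (fun _ : Fin 2 => ℝ) 0).continuous
  have h1 : Continuous fun p : E2 => p 1 := (PiLp.proj 2 (𝕜 := ℝ) (fun _ : Fin 2 => ℝ) 1).continuous
  have : quadSet a b = {p : E2 | 0 ≤ p 1} ∩ {p : E2 | p 1 ≤ 1} ∩ {p : E2 | p 1 ≤ p 0} ∩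
      {p : E2 | p 0 ≤ b + (a - b) * p 1} := by
    ext p; simp [quadSet, and_assoc]
  rw [this]
  exact (((isClosed_le continuous_const h1).inter (isClosed_le h1 continuous_const)).inter
    (isClosed_le h1 h0)).inter
    (isClosed_le h0 (by continuity))

/-- The open quadrilateral. -/
def quadOpen (a b : ℝ) : Set E2 :=
  {p | 0 < p 1 ∧ p 1 < 1 ∧ p 1 < p 0 ∧ p 0 < b + (a - b) * p 1}

lemma isOpen_quadOpen (a b : ℝ) : IsOpen (quadOpen a b) := by
  have h0 : Continuous fun p : E2 => p 0 := (PiLp.proj 2 (𝕜 := ℝ) (fun _ : Fin 2 => ℝ) 0).continuous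
  have h1 : Continuous fun p : E2 => p 1 := (PiLp.proj 2 (𝕜 := ℝ) (fun _ : Fin 2 => ℝ) 1).continuous
  have : quadOpen a b = {p : E2 | 0 < p 1} ∩ {p : E2 | p 1 < 1} ∩ {p : E2 | p 1 < p 0} ∩
      {p : E2 | p 0 < b + (a - b) * p 1} := by
    ext p; simp [quadOpen, and_assoc]
  rw [this]
  exact (((isOpen_lt continuous_const h1).inter (isOpen_lt h1 continuous_const)).inter
    (isOpen_lt h1 h0)).inter
    (isOpen_lt h0 (by continuity))

section Quad
variable {a b : ℝ}

/-- Vertices. -/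
lemma quad_hull_eq (ha : 2 ≤ a) (hb : 2 ≤ b) :
    convexHull ℝ {pt 0 0, pt 1 1, pt a 1, pt b 0} = quadSet a b := by
  apply le_antisymm
  · apply convexHull_min _ (convex_quadSet a b)
    rintro p (rfl | rfl | rfl | rfl) <;>
      simp only [quadSet, Set.mem_setOf_eq, pt_zero, pt_one] <;>
      refine ⟨by nlinarith, by nlinarith, by nlinarith, by nlinarith⟩
  · rintro p ⟨h1, h2, h3, h4⟩
    set y := p 1 with hy
    have hhull := convex_convexHull ℝ ({pt 0 0, pt 1 1, pt a 1, pt b 0} : Set E2)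
    have hv0 : pt 0 0 ∈ convexHull ℝ ({pt 0 0, pt 1 1, pt a 1, pt b 0} : Set E2) :=
      subset_convexHull _ _ (by simp)
    have hv1 : pt 1 1 ∈ convexHull ℝ ({pt 0 0, pt 1 1, pt a 1, pt b 0} : Set E2) :=
      subset_convexHull _ _ (by simp)
    have hv2 : pt a 1 ∈ convexHull ℝ ({pt 0 0, pt 1 1, pt a 1, pt b 0} : Set E2) :=
      subset_convexHull _ _ (by simp)
    have hv3 : pt b 0 ∈ convexHull ℝ ({pt 0 0, pt 1 1, pt a 1, pt b 0} : Set E2) :=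
      subset_convexHull _ _ (by simp)
    have hl : pt y y ∈ convexHull ℝ ({pt 0 0, pt 1 1, pt a 1, pt b 0} : Set E2) := by
      have := hhull.segment_subset hv0 hv1
      apply this
      have hc := mem_segment_of_combo (v := pt 0 0) (w := pt 1 1) h1 h2
      rwa [pt_combo, show (1 - y) * 0 + y * 1 = y by ring] at hc
    have hr : pt (b + (a - b) * y) y ∈
        convexHull ℝ ({pt 0 0, pt 1 1, pt a 1, pt b 0} : Set E2) := by
      have := hhull.segment_subset hv3 hv2
      apply this
      have hc := mem_segment_of_combo (v := pt b 0) (w := pt a 1) h1 h2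
      rwa [pt_combo, show (1 - y) * b + y * a = b + (a - b) * y by ring,
        show (1 - y) * 0 + y * 1 = y by ring] at hc
    have hp : p ∈ segment ℝ (pt y y) (pt (b + (a - b) * y) y) := by
      rw [eq_pt p]
      exact mem_segment_horiz _ h3 h4
    exact hhull.segment_subset hl hr hp

lemma quadOpen_subset : quadOpen a b ⊆ quadSet a b := by
  rintro p ⟨h1, h2, h3, h4⟩
  exact ⟨h1.le, h2.le, h3.le, h4.le⟩

lemma interior_quadSet : interior (quadSet a b) = quadOpen a b := by
  apply le_antisymm
  · intro p hp
    have hmem : quadSet a b ∈ nhds p := mem_interior_iff_mem_nhds.mp hp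
    obtain ⟨ε, hε, hball⟩ := Metric.mem_nhds_iff.mp hmem
    have hpP : p ∈ quadSet a b := hball (Metric.mem_ball_self hε)
    obtain ⟨h1, h2, h3, h4⟩ := hpP
    have key : ∀ i : Fin 2, ∀ c : ℝ, |c| = 1 →
        (p + (ε / 2) • EuclideanSpace.single i c) ∈ quadSet a b := by
      intro i c hc
      apply hball
      rw [Metric.mem_ball, dist_eq_norm]
      have : p + (ε / 2) • EuclideanSpace.single i c - p = (ε / 2) • EuclideanSpace.single i c := by
        abel
      rw [this, norm_smul, EuclideanSpace.norm_single]
      simp only [Real.norm_eq_abs]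
      rw [hc, abs_of_pos (show (0:ℝ) < ε / 2 by linarith), mul_one]
      linarith
    have hcoord : ∀ i : Fin 2, ∀ c : ℝ, (p + (ε / 2) • EuclideanSpace.single i c) i =
        p i + (ε / 2) * c := by
      intro i c
      rw [PiLp.add_apply, PiLp.smul_apply, EuclideanSpace.single_apply, if_pos rfl,
        smul_eq_mul]
    have hcoord' : ∀ i j : Fin 2, i ≠ j → ∀ c : ℝ,
        (p + (ε / 2) • EuclideanSpace.single i c) j = p j := by
      intro i j hij c
      rw [PiLp.add_apply, PiLp.smul_apply, EuclideanSpace.single_apply, if_neg (Ne.symm hij),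
        smul_eq_mul, mul_zero, add_zero]
    refine ⟨?_, ?_, ?_, ?_⟩
    · rcases eq_or_lt_of_le h1 with heq | h
      · exfalso
        have := key 1 (-1) (by norm_num)
        obtain ⟨g1, _, _, _⟩ := this
        rw [hcoord 1 (-1)] at g1
        rw [← heq] at g1
        linarith
      · exact h
    · rcases eq_or_lt_of_le h2 with heq | h
      · exfalso
        have := key 1 1 (by norm_num)
        obtain ⟨_, g2, _, _⟩ := this
        rw [hcoord 1 1] at g2
        rw [heq] at g2
        linarith
      · exact h
    · rcases eq_or_lt_of_le h3 with heq | h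
      · exfalso
        have := key 0 (-1) (by norm_num)
        obtain ⟨_, _, g3, _⟩ := this
        rw [hcoord 0 (-1), hcoord' 0 1 (by decide) (-1)] at g3
        rw [← heq] at g3
        linarith
      · exact h
    · rcases eq_or_lt_of_le h4 with heq | h
      · exfalso
        have := key 0 1 (by norm_num)
        obtain ⟨_, _, _, g4⟩ := this
        rw [hcoord 0 1, hcoord' 0 1 (by decide) 1] at g4
        rw [heq] at g4
        linarith
      · exact h
  · exact (isOpen_quadOpen a b).subset_interior_iff.mpr quadOpen_subset

lemma frontier_quadSet (ha : 2 ≤ a) (hb : 2 ≤ b) :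
    frontier (quadSet a b) =
      segment ℝ (pt 0 0) (pt b 0) ∪ segment ℝ (pt 1 1) (pt a 1) ∪
      segment ℝ (pt 0 0) (pt 1 1) ∪ segment ℝ (pt b 0) (pt a 1) := by
  have hfr : frontier (quadSet a b) = quadSet a b \ quadOpen a b := by
    rw [frontier, (isClosed_quadSet a b).closure_eq, interior_quadSet]
  rw [hfr]
  apply le_antisymm
  · rintro p ⟨⟨h1, h2, h3, h4⟩, hnot⟩
    simp only [quadOpen, Set.mem_setOf_eq, not_and_or, not_lt] at hnot
    rcases hnot with h | h | h | h
    · -- p 1 = 0 : bottom edge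
      have hp1 : p 1 = 0 := le_antisymm h h1
      left; left; left
      have : p = pt (p 0) 0 := by
        conv_lhs => rw [eq_pt p]
        rw [hp1]
      rw [this]
      exact mem_segment_horiz _ (by linarith [hp1 ▸ h3]) (by nlinarith [hp1 ▸ h4])
    · -- p 1 = 1 : top edge
      have hp1 : p 1 = 1 := le_antisymm h2 h
      left; left; right
      have : p = pt (p 0) 1 := by
        conv_lhs => rw [eq_pt p]
        rw [hp1]
      rw [this]
      exact mem_segment_horiz _ (by linarith [hp1 ▸ h3]) (by nlinarith [hp1 ▸ h4])
    · -- p 1 = p 0 : left edge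
      have hp1 : p 0 = p 1 := le_antisymm h h3
      left; right
      have hc := mem_segment_of_combo (v := pt 0 0) (w := pt 1 1) h1 h2
      rw [pt_combo, show (1 - p 1) * 0 + p 1 * 1 = p 1 by ring] at hc
      have : p = pt (p 1) (p 1) := by
        conv_lhs => rw [eq_pt p]
        rw [hp1]
      rwa [this]
    · -- right edge
      have hp0 : p 0 = b + (a - b) * p 1 := le_antisymm h4 h
      right
      have hc := mem_segment_of_combo (v := pt b 0) (w := pt a 1) h1 h2
      rw [pt_combo, show (1 - p 1) * b + p 1 * a = b + (a - b) * p 1 by ring,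
        show (1 - p 1) * 0 + p 1 * 1 = p 1 by ring] at hc
      have : p = pt (b + (a - b) * p 1) (p 1) := by
        conv_lhs => rw [eq_pt p]
        rw [hp0]
      rwa [this]
  · intro p hp
    have hseg : ∀ v w : E2, v ∈ quadSet a b → w ∈ quadSet a b →
        segment ℝ v w ⊆ quadSet a b := fun v w hv hw => (convex_quadSet a b).segment_subset hv hw
    have hmem0 : pt 0 0 ∈ quadSet a b := ⟨by norm_num, by norm_num, by norm_num, by
      simp only [pt_zero, pt_one]; nlinarith⟩
    have hmem1 : pt 1 1 ∈ quadSet a b := ⟨by norm_num, by norm_num, by norm_num, by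
      simp only [pt_zero, pt_one]; nlinarith⟩
    have hmem2 : pt a 1 ∈ quadSet a b := ⟨by norm_num, by norm_num, by
      simp only [pt_zero, pt_one]; nlinarith, by simp only [pt_zero, pt_one]; nlinarith⟩
    have hmem3 : pt b 0 ∈ quadSet a b := ⟨by norm_num, by norm_num, by
      simp only [pt_zero, pt_one]; nlinarith, by simp only [pt_zero, pt_one]; nlinarith⟩
    constructor
    · rcases hp with ((h | h) | h) | h
      · exact hseg _ _ hmem0 hmem3 h
      · exact hseg _ _ hmem1 hmem2 h
      · exact hseg _ _ hmem0 hmem1 h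
      · exact hseg _ _ hmem3 hmem2 h
    · rintro ⟨g1, g2, g3, g4⟩
      rcases hp with ((h | h) | h) | h
      · obtain ⟨t, ht0, ht1, hco⟩ := segment_coords h
        have := hco 1
        simp only [pt_one] at this
        rw [this] at g1
        linarith
      · obtain ⟨t, ht0, ht1, hco⟩ := segment_coords h
        have := hco 1
        simp only [pt_one] at this
        rw [this] at g2
        linarith
      · obtain ⟨t, ht0, ht1, hco⟩ := segment_coords h
        have e0 := hco 0
        have e1 := hco 1
        simp only [pt_zero, pt_one] at e0 e1
        rw [e0, e1] at g3
        linarith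
      · obtain ⟨t, ht0, ht1, hco⟩ := segment_coords h
        have e0 := hco 0
        have e1 := hco 1
        simp only [pt_zero, pt_one] at e0 e1
        rw [e0, e1] at g4
        nlinarith

end Quad

lemma nullMeasurable_segment (v w : E2) : NullMeasurableSet (segment ℝ v w) μH[1] := by
  have hc : IsCompact (segment ℝ v w) := by
    rw [segment_eq_image ℝ v w]
    exact isCompact_Icc.image (by continuity)
  exact hc.isClosed.measurableSet.nullMeasurableSet

lemma edist_pt (x1 y1 x2 y2 : ℝ) :
    edist (pt x1 y1) (pt x2 y2) =
      ENNReal.ofReal (Real.sqrt ((x1 - x2) ^ 2 + (y1 - y2) ^ 2)) := by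
  rw [edist_dist, EuclideanSpace.dist_eq]
  congr 2
  rw [Fin.sum_univ_two]
  simp [Real.dist_eq, sq_abs]

section QuadMeasure
variable {a b : ℝ}

lemma quad_perimeter (ha : 2 ≤ a) (hb : 2 ≤ b) (hab : a ≠ b) :
    μH[1] (frontier (quadSet a b)) =
      ENNReal.ofReal b + ENNReal.ofReal (a - 1) + ENNReal.ofReal (Real.sqrt 2) +
        ENNReal.ofReal (Real.sqrt ((a - b) ^ 2 + 1)) := by
  haveI : NullSingletonClass (μH[1] : Measure E2) := Measure.nullSingletonClass_hausdorff E2 zero_lt_one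
  rw [frontier_quadSet ha hb]
  set s1 := segment ℝ (pt 0 0) (pt b 0) with hs1
  set s2 := segment ℝ (pt 1 1) (pt a 1) with hs2
  set s3 := segment ℝ (pt 0 0) (pt 1 1) with hs3
  set s4 := segment ℝ (pt b 0) (pt a 1) with hs4
  have K1 : ∀ p ∈ s1, p 1 = 0 := by
    intro p hp
    obtain ⟨t, _, _, hco⟩ := segment_coords hp
    have := hco 1
    simpa using this
  have K2 : ∀ p ∈ s2, p 1 = 1 := by
    intro p hp
    obtain ⟨t, _, _, hco⟩ := segment_coords hp
    have := hco 1
    simp only [pt_one] at this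
    rw [this]; ring
  have K3 : ∀ p ∈ s3, p 0 = p 1 := by
    intro p hp
    obtain ⟨t, _, _, hco⟩ := segment_coords hp
    have e0 := hco 0
    have e1 := hco 1
    simp only [pt_zero, pt_one] at e0 e1
    rw [e0, e1]
  have K4 : ∀ p ∈ s4, p 0 = b + (a - b) * p 1 := by
    intro p hp
    obtain ⟨t, _, _, hco⟩ := segment_coords hp
    have e0 := hco 0
    have e1 := hco 1
    simp only [pt_zero, pt_one] at e0 e1
    rw [e0, e1]; ring
  have hd12 : AEDisjoint μH[1] s1 s2 := by
    have : s1 ∩ s2 = ∅ := by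
      ext p
      simp only [Set.mem_inter_iff, Set.mem_empty_iff_false, iff_false, not_and]
      intro h1 h2
      have e1 := K1 p h1
      have e2 := K2 p h2
      linarith
    unfold AEDisjoint
    rw [this, measure_empty]
  have hd13 : AEDisjoint μH[1] s1 s3 := by
    apply measure_mono_null (t := {pt 0 0})
    · rintro p ⟨h1, h3⟩
      have e1 := K1 p h1
      have e0 := (K3 p h3).trans e1
      have : p = pt 0 0 := by
        conv_lhs => rw [eq_pt p]
        rw [e0, e1]
      simp [this]
    · exact measure_singleton _
  have hd14 : AEDisjoint μH[1] s1 s4 := by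
    apply measure_mono_null (t := {pt b 0})
    · rintro p ⟨h1, h4⟩
      have e1 := K1 p h1
      have e0 := K4 p h4
      rw [e1, mul_zero, add_zero] at e0
      have : p = pt b 0 := by
        conv_lhs => rw [eq_pt p]
        rw [e0, e1]
      simp [this]
    · exact measure_singleton _
  have hd23 : AEDisjoint μH[1] s2 s3 := by
    apply measure_mono_null (t := {pt 1 1})
    · rintro p ⟨h2, h3⟩
      have e1 := K2 p h2
      have e0 := (K3 p h3).trans e1
      have : p = pt 1 1 := by
        conv_lhs => rw [eq_pt p]
        rw [e0, e1]
      simp [this]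
    · exact measure_singleton _
  have hd24 : AEDisjoint μH[1] s2 s4 := by
    apply measure_mono_null (t := {pt a 1})
    · rintro p ⟨h2, h4⟩
      have e1 := K2 p h2
      have e0 := K4 p h4
      rw [e1, mul_one] at e0
      have e0' : p 0 = a := by rw [e0]; ring
      have : p = pt a 1 := by
        conv_lhs => rw [eq_pt p]
        rw [e0', e1]
      simp [this]
    · exact measure_singleton _
  have hd34 : AEDisjoint μH[1] s3 s4 := by
    have hsub : (s3 ∩ s4).Subsingleton := by
      rintro p ⟨hp3, hp4⟩ q ⟨hq3, hq4⟩
      have ep0 := K3 p hp3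
      have ep4 := K4 p hp4
      have eq0 := K3 q hq3
      have eq4 := K4 q hq4
      have hcoef : 1 - (a - b) ≠ 0 := by
        intro hzero
        have : p 1 = b + (a - b) * p 1 := by rw [← ep4, ep0]
        have hab1 : a - b = 1 := by linarith
        rw [hab1, one_mul] at this
        linarith
      have hp1 : p 1 * (1 - (a - b)) = b := by
        have : p 1 = b + (a - b) * p 1 := by rw [← ep4, ep0]
        linarith [this]
      have hq1 : q 1 * (1 - (a - b)) = b := by
        have : q 1 = b + (a - b) * q 1 := by rw [← eq4, eq0]
        linarith [this]
      have h11 : p 1 = q 1 := by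
        have := hp1.trans hq1.symm
        exact mul_right_cancel₀ hcoef this
      have h00 : p 0 = q 0 := by rw [ep0, eq0, h11]
      rw [eq_pt p, eq_pt q, h00, h11]
    exact hsub.measure_zero _
  have hm2 := nullMeasurable_segment (pt 1 1) (pt a 1)
  have hm3 := nullMeasurable_segment (pt 0 0) (pt 1 1)
  have hm4 := nullMeasurable_segment (pt b 0) (pt a 1)
  rw [measure_union₀ hm4 ((hd14.union_left hd24).union_left hd34),
    measure_union₀ hm3 (hd13.union_left hd23),
    measure_union₀ hm2 hd12]
  simp only [hs1, hs2, hs3, hs4]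
  rw [hausdorffMeasure_segment, hausdorffMeasure_segment,
    hausdorffMeasure_segment, hausdorffMeasure_segment, edist_pt, edist_pt, edist_pt, edist_pt]
  congr 2
  · congr 2
    · congr 1
      rw [show (0 - b) ^ 2 + (0 - 0 : ℝ) ^ 2 = b ^ 2 by ring, Real.sqrt_sq (by linarith)]
    · congr 1
      rw [show (1 - a) ^ 2 + (1 - 1 : ℝ) ^ 2 = (a - 1) ^ 2 by ring,
        Real.sqrt_sq (by linarith)]
  · congr 1
    norm_num
  · congr 1
    ring_nf

end QuadMeasure

/-! ### The Thue–Morse hull -/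

lemma thueMorse_eq_tm (n : ℕ) : thueMorse n = (tm n : ℝ) := rfl

def aa (N : ℕ) : ℕ := sSup {i | i ≤ N ∧ tm i = 1}
def bb (N : ℕ) : ℕ := sSup {i | i ≤ N ∧ tm i = 0}

lemma aa_spec {N : ℕ} (hN : 1 ≤ N) : aa N ≤ N ∧ tm (aa N) = 1 := by
  have := Nat.sSup_mem (s := {i | i ≤ N ∧ tm i = 1}) ⟨1, hN, tm_one⟩ ⟨N, fun x hx => hx.1⟩
  exact this

lemma bb_spec {N : ℕ} : bb N ≤ N ∧ tm (bb N) = 0 := by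
  have := Nat.sSup_mem (s := {i | i ≤ N ∧ tm i = 0}) ⟨0, Nat.zero_le N, tm_zero⟩
    ⟨N, fun x hx => hx.1⟩
  exact this

lemma le_aa {N i : ℕ} (hi : i ≤ N) (ht : tm i = 1) : i ≤ aa N :=
  le_csSup ⟨N, fun x hx => hx.1⟩ ⟨hi, ht⟩

lemma le_bb {N i : ℕ} (hi : i ≤ N) (ht : tm i = 0) : i ≤ bb N :=
  le_csSup ⟨N, fun x hx => hx.1⟩ ⟨hi, ht⟩

lemma tm_window (k : ℕ) : tm k ≠ tm (k + 1) ∨ tm (k + 1) ≠ tm (k + 2) := by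
  rcases Nat.even_or_odd k with ⟨j, hj⟩ | ⟨j, hj⟩
  · left
    have : k = 2 * j := by omega
    subst this
    exact tm_ne_even j
  · right
    subst hj
    have h := tm_ne_even (j + 1)
    rw [show 2 * j + 1 + 1 = 2 * (j + 1) by ring, show 2 * j + 1 + 2 = 2 * (j + 1) + 1 by ring]
    exact h

lemma aa_lb {N : ℕ} (hN : 2 ≤ N) : N ≤ aa N + 2 := by
  obtain ⟨k, rfl⟩ : ∃ k, N = k + 2 := ⟨N - 2, by omega⟩
  have hw := tm_window k
  have h0 := tm_le_one k
  have h1 := tm_le_one (k + 1)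
  have h2 := tm_le_one (k + 2)
  rcases Nat.eq_or_lt_of_le h2 with ht2 | ht2
  · have := le_aa (le_refl (k + 2)) ht2
    omega
  · have ht2' : tm (k + 2) = 0 := by omega
    rcases Nat.eq_or_lt_of_le h1 with ht1 | ht1
    · have := le_aa (by omega : k + 1 ≤ k + 2) ht1
      omega
    · have ht1' : tm (k + 1) = 0 := by omega
      have htk : tm k = 1 := by
        rcases hw with h | h
        · omega
        · omega
      have := le_aa (by omega : k ≤ k + 2) htk
      omega

lemma bb_lb {N : ℕ} (hN : 2 ≤ N) : N ≤ bb N + 2 := by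
  obtain ⟨k, rfl⟩ : ∃ k, N = k + 2 := ⟨N - 2, by omega⟩
  have hw := tm_window k
  have h0 := tm_le_one k
  have h1 := tm_le_one (k + 1)
  have h2 := tm_le_one (k + 2)
  rcases Nat.eq_zero_or_pos (tm (k + 2)) with ht2 | ht2
  · have := le_bb (le_refl (k + 2)) ht2
    omega
  · have ht2' : tm (k + 2) = 1 := by omega
    rcases Nat.eq_zero_or_pos (tm (k + 1)) with ht1 | ht1
    · have := le_bb (by omega : k + 1 ≤ k + 2) ht1
      omega
    · have ht1' : tm (k + 1) = 1 := by omega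
      have htk : tm k = 0 := by
        rcases hw with h | h <;> omega
      have := le_bb (by omega : k ≤ k + 2) htk
      omega

lemma aa_or_bb_eq (N : ℕ) : aa N = N ∨ bb N = N := by
  have h := tm_le_one N
  rcases Nat.eq_zero_or_pos (tm N) with ht | ht
  · right
    exact le_antisymm bb_spec.1 (le_bb (le_refl N) ht)
  · left
    have hN1 : 1 ≤ N := by
      by_contra h'
      have : N = 0 := by omega
      rw [this, tm_zero] at ht
      omega
    exact le_antisymm (aa_spec hN1).1 (le_aa (le_refl N) (by omega))

lemma aa_ne_bb {N : ℕ} (hN : 1 ≤ N) : aa N ≠ bb N := by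
  intro h
  have h1 := (aa_spec hN).2
  have h2 := bb_spec (N := N).2
  rw [h] at h1
  omega

/-- Every point of the polygonal path is in the curve. -/
lemma pt_mem_polyCurve {N i : ℕ} (hN : 1 ≤ N) (hi : i ≤ N) :
    pt i (thueMorse i) ∈ polyCurve thueMorse N := by
  unfold polyCurve
  rcases Nat.lt_or_ge i N with h | h
  · exact Set.mem_biUnion (Finset.mem_range.mpr h) (left_mem_segment _ _ _)
  · obtain ⟨k, rfl⟩ : ∃ k, N = k + 1 := ⟨N - 1, by omega⟩
    have hik : i = k + 1 := by omega
    subst hik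
    have hmem : k ∈ Finset.range (k + 1) := Finset.mem_range.mpr (by omega)
    have hpt : pt ((k : ℝ) + 1) (thueMorse (k + 1)) ∈
        segment ℝ (pt k (thueMorse k)) (pt ((k : ℝ) + 1) (thueMorse (k + 1))) :=
      right_mem_segment _ _ _
    have hc : ((k + 1 : ℕ) : ℝ) = (k : ℝ) + 1 := by push_cast; ring
    rw [hc]
    exact Set.mem_biUnion hmem hpt

lemma hull_polyCurve_eq {N : ℕ} (hN : 4 ≤ N) :
    convexHull ℝ (polyCurve thueMorse N) = quadSet (aa N : ℝ) (bb N : ℝ) := by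
  have hN1 : 1 ≤ N := by omega
  have hN2 : 2 ≤ N := by omega
  have haa := aa_spec hN1
  have hbb := bb_spec (N := N)
  have haal := aa_lb hN2
  have hbbl := bb_lb hN2
  have ha2 : (2 : ℝ) ≤ (aa N : ℝ) := by exact_mod_cast (by omega : 2 ≤ aa N)
  have hb2 : (2 : ℝ) ≤ (bb N : ℝ) := by exact_mod_cast (by omega : 2 ≤ bb N)
  rw [← quad_hull_eq ha2 hb2]
  apply le_antisymm
  · apply convexHull_min _ (convex_convexHull ℝ _)
    intro p hp
    simp only [polyCurve, Set.mem_iUnion] at hp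
    obtain ⟨i, hi, hseg⟩ := hp
    have hi' : i < N := Finset.mem_range.mp hi
    have hhull := convex_convexHull ℝ
      ({pt 0 0, pt 1 1, pt (aa N : ℝ) 1, pt (bb N : ℝ) 0} : Set E2)
    have hvert : ∀ j : ℕ, j ≤ N → pt j (thueMorse j) ∈
        convexHull ℝ ({pt 0 0, pt 1 1, pt (aa N : ℝ) 1, pt (bb N : ℝ) 0} : Set E2) := by
      intro j hj
      have hj1 := tm_le_one j
      rcases Nat.eq_zero_or_pos (tm j) with htj | htj
      · -- on the bottom edge
        have hmem : pt (j : ℝ) 0 ∈ segment ℝ (pt 0 0) (pt (bb N : ℝ) 0) :=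
          mem_segment_horiz 0 (by positivity) (by exact_mod_cast le_bb hj htj)
        have : thueMorse j = 0 := by rw [thueMorse_eq_tm, htj]; norm_num
        rw [this]
        refine hhull.segment_subset (subset_convexHull _ _ (by simp))
          (subset_convexHull _ _ (by simp)) hmem
      · -- on the top edge
        have htj' : tm j = 1 := by omega
        have hj0 : 1 ≤ j := by
          by_contra h'
          have : j = 0 := by omega
          rw [this, tm_zero] at htj'
          omega
        have hmem : pt (j : ℝ) 1 ∈ segment ℝ (pt 1 1) (pt (aa N : ℝ) 1) :=
          mem_segment_horiz 1 (by exact_mod_cast hj0) (by exact_mod_cast le_aa hj htj')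
        have : thueMorse j = 1 := by rw [thueMorse_eq_tm, htj']; norm_num
        rw [this]
        refine hhull.segment_subset (subset_convexHull _ _ (by simp))
          (subset_convexHull _ _ (by simp)) hmem
    have h1 := hvert i (by omega)
    have h2 := hvert (i + 1) (by omega)
    have hc : ((i : ℝ) + 1) = ((i + 1 : ℕ) : ℝ) := by push_cast; ring
    rw [hc] at hseg
    exact hhull.segment_subset h1 h2 hseg
  · apply convexHull_min _ (convex_convexHull ℝ _)
    have hsub := subset_convexHull ℝ (polyCurve thueMorse N)
    rintro p (rfl | rfl | rfl | rfl)
    · have := pt_mem_polyCurve hN1 (Nat.zero_le N)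
      rw [show thueMorse 0 = 0 from by rw [thueMorse_eq_tm, tm_zero]; norm_num,
        show ((0 : ℕ) : ℝ) = 0 from by norm_num] at this
      exact hsub this
    · have := pt_mem_polyCurve hN1 (by omega : 1 ≤ N)
      rw [show thueMorse 1 = 1 from by rw [thueMorse_eq_tm, tm_one]; norm_num,
        show ((1 : ℕ) : ℝ) = 1 from by norm_num] at this
      exact hsub this
    · have := pt_mem_polyCurve hN1 haa.1
      rw [show thueMorse (aa N) = 1 from by rw [thueMorse_eq_tm, haa.2]; norm_num] at this
      exact hsub this
    · have := pt_mem_polyCurve hN1 hbb.1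
      rw [show thueMorse (bb N) = 0 from by rw [thueMorse_eq_tm, hbb.2]; norm_num] at this
      exact hsub this

lemma polyDelta_eq {N : ℕ} (hN : 4 ≤ N) :
    polyDelta thueMorse N = (bb N : ℝ) + ((aa N : ℝ) - 1) + Real.sqrt 2 +
      Real.sqrt (((aa N : ℝ) - (bb N : ℝ)) ^ 2 + 1) := by
  have hN1 : 1 ≤ N := by omega
  have hN2 : 2 ≤ N := by omega
  have haa := aa_spec hN1
  have haal := aa_lb hN2
  have hbbl := bb_lb hN2
  have ha2 : (2 : ℝ) ≤ (aa N : ℝ) := by exact_mod_cast (by omega : 2 ≤ aa N)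
  have hb2 : (2 : ℝ) ≤ (bb N : ℝ) := by exact_mod_cast (by omega : 2 ≤ bb N)
  have hab : (aa N : ℝ) ≠ (bb N : ℝ) := by
    exact_mod_cast fun h => aa_ne_bb hN1 (Nat.cast_injective h)
  unfold polyDelta
  rw [hull_polyCurve_eq hN, quad_perimeter ha2 hb2 hab]
  rw [ENNReal.toReal_add (by finiteness) (by finiteness),
    ENNReal.toReal_add (by finiteness) (by finiteness),
    ENNReal.toReal_add (by finiteness) (by finiteness),
    ENNReal.toReal_ofReal (by linarith), ENNReal.toReal_ofReal (by linarith),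
    ENNReal.toReal_ofReal (Real.sqrt_nonneg _), ENNReal.toReal_ofReal (Real.sqrt_nonneg _)]

/-! ### Length of the Thue–Morse polygonal curve -/

lemma cC_le (N : ℕ) : cC N ≤ N := by
  have := Finset.card_filter_le (Finset.range N) (fun i => tm i ≠ tm (i + 1))
  simpa [cC, cnt] using this

lemma polyLength_eq (N : ℕ) :
    polyLength thueMorse N = ((N : ℝ) - cC N) + Real.sqrt 2 * cC N := by
  unfold polyLength
  rw [← Finset.sum_filter_add_sum_filter_not (Finset.range N) (fun i => tm i ≠ tm (i + 1))]
  have h1 : ∑ i ∈ (Finset.range N).filter (fun i => tm i ≠ tm (i + 1)),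
      Real.sqrt (1 + (thueMorse (i + 1) - thueMorse i) ^ 2) = Real.sqrt 2 * cC N := by
    rw [Finset.sum_congr rfl (g := fun _ => Real.sqrt 2) ?_]
    · rw [Finset.sum_const, nsmul_eq_mul]
      unfold cC cnt
      ring
    · intro i hi
      have hne := (Finset.mem_filter.mp hi).2
      have e0 := tm_le_one i
      have e1 := tm_le_one (i + 1)
      have hsq : (thueMorse (i + 1) - thueMorse i) ^ 2 = 1 := by
        rw [thueMorse_eq_tm, thueMorse_eq_tm]
        rcases Nat.le_one_iff_eq_zero_or_eq_one.mp e0 with h | h <;>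
          rcases Nat.le_one_iff_eq_zero_or_eq_one.mp e1 with h' | h' <;>
          first
            | exact absurd (h.trans h'.symm) hne
            | (rw [h, h']; norm_num)
      rw [hsq]
      norm_num
  have h2 : ∑ i ∈ (Finset.range N).filter (fun i => ¬tm i ≠ tm (i + 1)),
      Real.sqrt (1 + (thueMorse (i + 1) - thueMorse i) ^ 2) = ((N : ℝ) - cC N) := by
    rw [Finset.sum_congr rfl (g := fun _ => (1 : ℝ)) ?_]
    · rw [Finset.sum_const, nsmul_eq_mul, mul_one]
      have hcard := Finset.card_filter_add_card_filter_not
        (s := Finset.range N) (p := fun i => tm i ≠ tm (i + 1))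
      have : ((Finset.range N).filter (fun i => ¬tm i ≠ tm (i + 1))).card = N - cC N := by
        unfold cC cnt
        simp only [Finset.card_range] at hcard
        omega
      rw [this, Nat.cast_sub (cC_le N)]
    · intro i hi
      have heq : tm i = tm (i + 1) := not_not.mp (Finset.mem_filter.mp hi).2
      have hsq : (thueMorse (i + 1) - thueMorse i) ^ 2 = 0 := by
        rw [thueMorse_eq_tm, thueMorse_eq_tm, heq]
        ring
      rw [hsq]
      norm_num
  rw [h1, h2]
  ring

/-! ### The five limits -/

lemma tendsto_cC : Tendsto (fun N : ℕ => (cC N : ℝ) / N) atTop (nhds (2 / 3)) := by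
  apply tendsto_counter _ _ 1 zero_le_one
  intro N
  rw [one_mul]
  have h := cC_abs_bound N
  have he : |(cC N : ℝ) - 2 / 3 * N| = |(cC N : ℝ) - 2 * N / 3| := by
    congr 1
    ring
  rw [he]
  have hl : (0 : ℝ) ≤ Nat.log 2 N := by positivity
  linarith

lemma tendsto_cA : Tendsto (fun N : ℕ => (cA N : ℝ) / N) atTop (nhds (1 / 3)) := by
  apply tendsto_counter _ _ 1 zero_le_one
  intro N
  rw [one_mul]
  have h := cA_abs_bound N
  have he : |(cA N : ℝ) - 1 / 3 * N| = |(cA N : ℝ) - N / 3| := by congr 1; ring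
  rw [he]
  linarith

lemma tendsto_cD : Tendsto (fun N : ℕ => (cD N : ℝ) / N) atTop (nhds (1 / 3)) := by
  apply tendsto_counter _ _ 1 zero_le_one
  intro N
  rw [one_mul]
  have h := cD_abs_bound N
  have he : |(cD N : ℝ) - 1 / 3 * N| = |(cD N : ℝ) - N / 3| := by congr 1; ring
  rw [he]
  linarith

lemma tendsto_cE0 : Tendsto (fun N : ℕ => (cE0 N : ℝ) / N) atTop (nhds (1 / 6)) := by
  apply tendsto_counter _ _ 2 (by norm_num)
  intro N
  have h := cE0_abs_bound N
  have he : |(cE0 N : ℝ) - 1 / 6 * N| = |(cE0 N : ℝ) - N / 6| := by congr 1; ring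
  rw [he]
  linarith

lemma tendsto_cE1 : Tendsto (fun N : ℕ => (cE1 N : ℝ) / N) atTop (nhds (1 / 6)) := by
  apply tendsto_counter _ _ 2 (by norm_num)
  intro N
  have h := cE1_abs_bound N
  have he : |(cE1 N : ℝ) - 1 / 6 * N| = |(cE1 N : ℝ) - N / 6| := by congr 1; ring
  rw [he]
  linarith

lemma blockCount_eq_cnt (N : ℕ) (j j' : ℕ) (hj : j ≤ 1) (hj' : j' ≤ 1) :
    blockCount thueMorse N (j : ℝ) (j' : ℝ) = cnt (fun i => tm i = j ∧ tm (i + 1) = j') N := by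
  unfold blockCount cnt
  congr 1
  apply Finset.filter_congr
  intro i _
  rw [thueMorse_eq_tm, thueMorse_eq_tm]
  constructor
  · rintro ⟨h1, h2⟩
    exact ⟨by exact_mod_cast h1, by exact_mod_cast h2⟩
  · rintro ⟨h1, h2⟩
    exact ⟨by exact_mod_cast h1, by exact_mod_cast h2⟩

lemma sqrt_two_le_two : Real.sqrt 2 ≤ 2 := by
  nlinarith [Real.sq_sqrt (show (0:ℝ) ≤ 2 by norm_num), sq_nonneg (Real.sqrt 2 - 2),
    Real.sqrt_nonneg 2]

lemma tendsto_linear_div (c : ℝ) :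
    Tendsto (fun N : ℕ => (2 * (N : ℝ) + c) / N) atTop (nhds 2) := by
  have h : Tendsto (fun N : ℕ => 2 + c * (1 / (N : ℝ))) atTop (nhds 2) := by
    have := (tendsto_one_div_atTop_nhds_zero_nat).const_mul c
    have h2 := tendsto_const_nhds (x := (2 : ℝ)) (f := atTop (α := ℕ))
    have := h2.add this
    simpa using this
  apply h.congr'
  filter_upwards [eventually_ge_atTop 1] with N hN
  have hN0 : (N : ℝ) ≠ 0 := by positivity
  field_simp

lemma tendsto_polyDelta : Tendsto (fun N : ℕ => polyDelta thueMorse N / N) atTop (nhds 2) := by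
  apply tendsto_of_tendsto_of_tendsto_of_le_of_le' (tendsto_linear_div (-5)) (tendsto_linear_div 5)
  · filter_upwards [eventually_ge_atTop 4] with N hN
    have hN1 : 1 ≤ N := by omega
    have hN2 : 2 ≤ N := by omega
    have hNpos : (0 : ℝ) < N := by exact_mod_cast (by omega : 0 < N)
    rw [polyDelta_eq hN]
    have haub : (aa N : ℝ) ≤ N := by exact_mod_cast (aa_spec hN1).1
    have hbub : (bb N : ℝ) ≤ N := by exact_mod_cast bb_spec (N := N).1
    have halb : (N : ℝ) - 2 ≤ aa N := by
      have := aa_lb hN2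
      have : ((N : ℕ) : ℝ) ≤ (aa N : ℝ) + 2 := by exact_mod_cast this
      linarith
    have hblb : (N : ℝ) - 2 ≤ bb N := by
      have := bb_lb hN2
      have : ((N : ℕ) : ℝ) ≤ (bb N : ℝ) + 2 := by exact_mod_cast this
      linarith
    apply (div_le_div_iff_of_pos_right hNpos).mpr
    have h1 : (0 : ℝ) ≤ Real.sqrt 2 := Real.sqrt_nonneg _
    have h2 : (0 : ℝ) ≤ Real.sqrt (((aa N : ℝ) - bb N) ^ 2 + 1) := Real.sqrt_nonneg _
    linarith
  · filter_upwards [eventually_ge_atTop 4] with N hN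
    have hN1 : 1 ≤ N := by omega
    have hN2 : 2 ≤ N := by omega
    have hNpos : (0 : ℝ) < N := by exact_mod_cast (by omega : 0 < N)
    rw [polyDelta_eq hN]
    have haub : (aa N : ℝ) ≤ N := by exact_mod_cast (aa_spec hN1).1
    have hbub : (bb N : ℝ) ≤ N := by exact_mod_cast bb_spec (N := N).1
    have halb : (N : ℝ) - 2 ≤ aa N := by
      have := aa_lb hN2
      have : ((N : ℕ) : ℝ) ≤ (aa N : ℝ) + 2 := by exact_mod_cast this
      linarith
    have hblb : (N : ℝ) - 2 ≤ bb N := by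
      have := bb_lb hN2
      have : ((N : ℕ) : ℝ) ≤ (bb N : ℝ) + 2 := by exact_mod_cast this
      linarith
    apply (div_le_div_iff_of_pos_right hNpos).mpr
    have h1 : Real.sqrt 2 ≤ 2 := sqrt_two_le_two
    have h2 : Real.sqrt (((aa N : ℝ) - bb N) ^ 2 + 1) ≤ 3 := by
      rw [show (3 : ℝ) = Real.sqrt 9 by
        rw [show (9 : ℝ) = 3 ^ 2 by norm_num, Real.sqrt_sq (by norm_num)]]
      apply Real.sqrt_le_sqrt
      nlinarith
    linarith

lemma tendsto_two_polyLength :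
    Tendsto (fun N : ℕ => 2 * polyLength thueMorse N / N) atTop
      (nhds ((2 + 4 * Real.sqrt 2) / 3)) := by
  have hg : Tendsto (fun N : ℕ => 2 + (2 * Real.sqrt 2 - 2) * ((cC N : ℝ) / N)) atTop
      (nhds (2 + (2 * Real.sqrt 2 - 2) * (2 / 3))) := by
    exact (tendsto_const_nhds (x := (2 : ℝ))).add (tendsto_cC.const_mul _)
  have heq : (2 : ℝ) + (2 * Real.sqrt 2 - 2) * (2 / 3) = (2 + 4 * Real.sqrt 2) / 3 := by ring
  rw [heq] at hg
  apply hg.congr'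
  filter_upwards [eventually_ge_atTop 1] with N hN
  have hN0 : (N : ℝ) ≠ 0 := by positivity
  rw [polyLength_eq]
  field_simp
  ring

/-- For the Thue–Morse sequence: (i) the frequencies of the length-2 blocks exist and
satisfy `F₀₀ = F₁₁ = 1/6`, `F₀₁ = F₁₀ = 1/3`; (ii) the inconstancy of the sequence
exists and equals `(1 + 2√2)/3`. -/
theorem polyIncon_thueMorse :
    Tendsto (fun N : ℕ => (blockCount thueMorse N 0 0 : ℝ) / N) atTop (nhds (1 / 6)) ∧
    Tendsto (fun N : ℕ => (blockCount thueMorse N 1 1 : ℝ) / N) atTop (nhds (1 / 6)) ∧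
    Tendsto (fun N : ℕ => (blockCount thueMorse N 0 1 : ℝ) / N) atTop (nhds (1 / 3)) ∧
    Tendsto (fun N : ℕ => (blockCount thueMorse N 1 0 : ℝ) / N) atTop (nhds (1 / 3)) ∧
    Tendsto (fun N : ℕ => polyIncon thueMorse N) atTop
      (nhds ((1 + 2 * Real.sqrt 2) / 3)) := by
  refine ⟨?_, ?_, ?_, ?_, ?_⟩
  · apply tendsto_cE0.congr
    intro N
    have e : blockCount thueMorse N (0 : ℝ) 0 = cE0 N := by
      have := blockCount_eq_cnt N 0 0 (by norm_num) (by norm_num)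
      simpa [cE0] using this
    rw [e]
  · apply tendsto_cE1.congr
    intro N
    have e : blockCount thueMorse N (1 : ℝ) 1 = cE1 N := by
      have := blockCount_eq_cnt N 1 1 (by norm_num) (by norm_num)
      simpa [cE1] using this
    rw [e]
  · apply tendsto_cA.congr
    intro N
    have e : blockCount thueMorse N (0 : ℝ) 1 = cA N := by
      have := blockCount_eq_cnt N 0 1 (by norm_num) (by norm_num)
      simpa [cA] using this
    rw [e]
  · apply tendsto_cD.congr
    intro N
    have e : blockCount thueMorse N (1 : ℝ) 0 = cD N := by
      have := blockCount_eq_cnt N 1 0 (by norm_num) (by norm_num)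
      simpa [cD] using this
    rw [e]
  · have hfrac := tendsto_two_polyLength.div tendsto_polyDelta (by norm_num : (2 : ℝ) ≠ 0)
    have heq : ((2 + 4 * Real.sqrt 2) / 3) / 2 = (1 + 2 * Real.sqrt 2) / 3 := by ring
    rw [heq] at hfrac
    apply hfrac.congr'
    filter_upwards [eventually_ge_atTop 1] with N hN
    have hN0 : (N : ℝ) ≠ 0 := Nat.cast_ne_zero.mpr (by omega)
    show 2 * polyLength thueMorse N / N / (polyDelta thueMorse N / N) = polyIncon thueMorse N
    rw [div_div_div_comm, div_self hN0, div_one]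
    rfl
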